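/- arXiv:1109.1251 — 4 statements merged into one kernel-verified Lean document; each statement's English description precedes it below -/
import Mathlib

section
/- Two words w and w' over Σ are trace-equivalent with respect to the distribution {Σ_i, i ∈ I} if and only if w' can be obtained from w by a finite sequence of adjacent transpositions of independent letters; formally, w ∼ w' if and only if (w, w') belongs to the reflexive-transitive closure of the relation R defined by R(u ++ [σ, σ'] ++ v, u ++ [σ', σ] ++ v) for all words u, v and all independent pairs (σ, σ'). -/
/-- The projection of a word `w` onto the sub-alphabet `Sig i`:
erase all letters not in `Sig i`. -/
def proj {A I : Type*} [DecidableEq A] (Sig : I → Set A)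
    [∀ i, DecidablePred (· ∈ Sig i)] (i : I) (w : List A) : List A :=
  w.filter fun a => decide (a ∈ Sig i)

/-- Trace equivalence: two words are trace-equivalent iff all their projections agree. -/
def traceEquiv {A I : Type*} [DecidableEq A] (Sig : I → Set A)
    [∀ i, DecidablePred (· ∈ Sig i)] (w w' : List A) : Prop :=
  ∀ i, proj Sig i w = proj Sig i w'

/-- The trace-equivalence class `[w]` of a word `w`. -/
def traceClass {A I : Type*} [DecidableEq A] (Sig : I → Set A)
    [∀ i, DecidablePred (· ∈ Sig i)] (w : List A) : Set (List A) :=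
  {w' | traceEquiv Sig w w'}

/-- A language `L` is trace-closed if `w ∈ L` implies `[w] ⊆ L`. -/
def traceClosed {A I : Type*} [DecidableEq A] (Sig : I → Set A)
    [∀ i, DecidablePred (· ∈ Sig i)] (L : Set (List A)) : Prop :=
  ∀ w ∈ L, traceClass Sig w ⊆ L

/-- The product `∥_{i∈I} L i` of a family of languages `L i` over `Sig i`. -/
def prodLang {A I : Type*} [DecidableEq A] (Sig : I → Set A)
    [∀ i, DecidablePred (· ∈ Sig i)] (L : I → Set (List A)) : Set (List A) :=
  {w | ∀ i, proj Sig i w ∈ L i}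

/-- Letters `σ, σ'` are independent w.r.t. the distribution if no `Sig i` contains both. -/
def indep {A I : Type*} (Sig : I → Set A) (σ σ' : A) : Prop :=
  ¬ ∃ i, σ ∈ Sig i ∧ σ' ∈ Sig i

/-- One adjacent transposition of an independent pair of letters. -/
def swapRel {A I : Type*} (Sig : I → Set A) (x y : List A) : Prop :=
  ∃ u v σ σ', indep Sig σ σ' ∧ x = u ++ [σ, σ'] ++ v ∧ y = u ++ [σ', σ] ++ v

section aux
variable {A I : Type*} [DecidableEq A] (Sig : I → Set A) [∀ i, DecidablePred (· ∈ Sig i)]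

lemma swapRel_symm : Symmetric (swapRel Sig) := by
  rintro x y ⟨u, v, σ, σ', hind, hx, hy⟩
  exact ⟨u, v, σ', σ, fun ⟨i, h1, h2⟩ => hind ⟨i, h2, h1⟩, hy, hx⟩

lemma proj_swapRel {x y : List A} (h : swapRel Sig x y) (i : I) :
    proj Sig i x = proj Sig i y := by
  obtain ⟨u, v, σ, σ', hind, hx, hy⟩ := h
  subst hx hy
  simp only [proj, List.filter_append]
  congr 1
  congr 1
  by_cases h1 : σ ∈ Sig i <;> by_cases h2 : σ' ∈ Sig i
  · exact absurd ⟨i, h1, h2⟩ hind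
  all_goals simp [List.filter_cons, h1, h2]

lemma traceEquiv_of_rtg {x y : List A} (h : Relation.ReflTransGen (swapRel Sig) x y) :
    traceEquiv Sig x y := by
  induction h with
  | refl => intro i; rfl
  | tail _ hstep ih => intro i; rw [ih i, proj_swapRel Sig hstep i]

lemma rtg_cons {x y : List A} (a : A) (h : Relation.ReflTransGen (swapRel Sig) x y) :
    Relation.ReflTransGen (swapRel Sig) (a :: x) (a :: y) := by
  induction h with
  | refl => exact .refl
  | tail _ hstep ih =>
    refine ih.tail ?_
    obtain ⟨u, v, σ, σ', hind, hx, hy⟩ := hstep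
    exact ⟨a :: u, v, σ, σ', hind, by simp [hx], by simp [hy]⟩

lemma rtg_move (a : A) (u v : List A) (hind : ∀ b ∈ u, indep Sig b a) :
    Relation.ReflTransGen (swapRel Sig) (u ++ a :: v) (a :: (u ++ v)) := by
  induction u with
  | nil => exact .refl
  | cons b u ih =>
    have h1 : Relation.ReflTransGen (swapRel Sig) (b :: (u ++ a :: v)) (b :: a :: (u ++ v)) :=
      rtg_cons Sig b (ih fun c hc => hind c (List.mem_cons_of_mem _ hc))
    refine (h1.tail ?_)
    exact ⟨[], u ++ v, b, a, hind b List.mem_cons_self, rfl, rfl⟩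

lemma first_occ {a : A} {l : List A} (h : a ∈ l) :
    ∃ u v, l = u ++ a :: v ∧ a ∉ u := by
  induction l with
  | nil => simp at h
  | cons b t ih =>
    by_cases hb : a = b
    · exact ⟨[], t, by simp [hb], by simp⟩
    · obtain ⟨u, v, h1, h2⟩ := ih (by
        rcases List.mem_cons.mp h with h | h
        · exact absurd h hb
        · exact h)
      exact ⟨b :: u, v, by simp [h1], by simp [hb, h2]⟩

end aux

/-- Two words are trace-equivalent iff one can be obtained from the other by a finite
sequence of adjacent transpositions of independent letters. -/
theorem traceEquiv_iff_reflTransGen_swapRel {A I : Type*} [DecidableEq A] (Sig : I → Set A)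
    [∀ i, DecidablePred (· ∈ Sig i)] (hcov : (⋃ i, Sig i) = Set.univ)
    (w w' : List A) :
    traceEquiv Sig w w' ↔ Relation.ReflTransGen (swapRel Sig) w w' := by
  constructor
  · intro h
    induction w generalizing w' with
    | nil =>
      cases w' with
      | nil => exact .refl
      | cons b t =>
        obtain ⟨i, hbi⟩ : ∃ i, b ∈ Sig i := by
          have : b ∈ (⋃ i, Sig i) := by rw [hcov]; trivial
          simpa using this
        have := h i
        simp [proj, hbi] at this
    | cons a t ih =>
      obtain ⟨i0, hai⟩ : ∃ i, a ∈ Sig i := by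
        have : a ∈ (⋃ i, Sig i) := by rw [hcov]; trivial
        simpa using this
      have hmem : a ∈ w' := by
        have h0 := h i0
        simp only [proj, List.filter_cons, hai, decide_true, if_true] at h0
        have : a ∈ proj Sig i0 w' := by simp only [proj]; rw [← h0]; simp
        exact List.mem_of_mem_filter this
      obtain ⟨u, v, rfl, hanu⟩ := first_occ hmem
      have hindep : ∀ b ∈ u, indep Sig b a := by
        intro b hb ⟨i, hbi, hai'⟩
        have hbu : b ∈ proj Sig i u := by simp [proj, hbi, hb]
        obtain ⟨c, l, hcl⟩ := List.exists_cons_of_ne_nil (List.ne_nil_of_mem hbu)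
        have hi := h i
        simp only [proj, List.filter_append, List.filter_cons, hai', decide_true, if_true] at hi
        rw [show (List.filter (fun a => decide (a ∈ Sig i)) u) = c :: l from hcl] at hi
        have hca : a = c := by simpa using congrArg (·.head?) hi
        have : c ∈ u := List.mem_of_mem_filter (hcl ▸ (List.mem_cons_self : c ∈ c :: l))
        exact hanu (hca ▸ this)
      have hmove := rtg_move Sig a u v hindep
      have hte : traceEquiv Sig (u ++ a :: v) (a :: (u ++ v)) := traceEquiv_of_rtg Sig hmove
      have ht : traceEquiv Sig t (u ++ v) := by
        intro i
        have hi : proj Sig i (a :: t) = proj Sig i (a :: (u ++ v)) := (h i).trans (hte i)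
        by_cases hA : a ∈ Sig i <;> simpa [proj, List.filter_cons, hA] using hi
      exact (rtg_cons Sig a (ih _ ht)).trans
        ((@Relation.ReflTransGen.stdSymm _ _ ⟨fun _ _ h => swapRel_symm Sig h⟩).symm _ _ hmove)
  · exact traceEquiv_of_rtg Sig
end

section
/- Let B be a nondeterministic finite automaton over alphabet Σ with state set Q, initial states Q_in, transition function δ : Q → Σ → Set Q, and accepting states F, and let S ⊆ Σ. Define the ε-NFA B^ε over the alphabet S with the same states Q, initial states Q_in, and accepting states F, whose transition function sends (q, σ) for σ ∈ S to δ(q, σ) and sends (q, ε) to ⋃_{σ ∉ S} δ(q, σ). Then the language accepted by B^ε equals the projection of the language of B onto S: L(B^ε) = { List.filter (· ∈ S) w | w ∈ L(B) }. -/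
/-- The ε-NFA `B^ε` over the sub-alphabet `S ⊆ A`, obtained from the NFA `B` over `A`:
it has the same states, initial states and accepting states as `B`; on a letter `σ ∈ S`
it takes the transitions of `B` on `σ`, and its ε-transitions from a state `q` go to
`⋃_{σ ∉ S} δ(q, σ)`. -/
def projEpsNFA {A Q : Type*} (S : Set A) (B : NFA A Q) : εNFA {a : A // a ∈ S} Q where
  step := fun q o =>
    match o with
    | some σ => B.step q σ.val
    | none => ⋃ σ ∈ {σ : A | σ ∉ S}, B.step q σ
  start := B.start
  accept := B.accept

section Aux

variable {A Q : Type*} (S : Set A) (B : NFA A Q)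

lemma nfa_evalFrom_cons (T : Set Q) (a : A) (u : List A) :
    B.evalFrom T (a :: u) = B.evalFrom (B.stepSet T a) u := rfl

lemma nfa_evalFrom_append (T : Set Q) (u v : List A) :
    B.evalFrom T (u ++ v) = B.evalFrom (B.evalFrom T u) v := by
  simp [NFA.evalFrom, List.foldl_append]

lemma nfa_stepSet_mono {T T' : Set Q} (h : T ⊆ T') (a : A) :
    B.stepSet T a ⊆ B.stepSet T' a := by
  intro q hq
  rw [NFA.mem_stepSet] at hq ⊢
  obtain ⟨t, ht, hq⟩ := hq
  exact ⟨t, h ht, hq⟩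

lemma nfa_evalFrom_mono {T T' : Set Q} (h : T ⊆ T') (u : List A) :
    B.evalFrom T u ⊆ B.evalFrom T' u := by
  induction u generalizing T T' with
  | nil => exact h
  | cons a u ih =>
    rw [nfa_evalFrom_cons, nfa_evalFrom_cons]
    exact ih (nfa_stepSet_mono B h a)

lemma nfa_stepSet_iUnion {ι : Type*} (f : ι → Set Q) (a : A) :
    B.stepSet (⋃ i, f i) a = ⋃ i, B.stepSet (f i) a := by
  ext q
  simp [NFA.mem_stepSet, Set.mem_iUnion]
  tauto

lemma nfa_evalFrom_iUnion {ι : Type*} (f : ι → Set Q) (u : List A) :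
    B.evalFrom (⋃ i, f i) u = ⋃ i, B.evalFrom (f i) u := by
  induction u generalizing f with
  | nil => rfl
  | cons a u ih =>
    simp only [nfa_evalFrom_cons, nfa_stepSet_iUnion]
    exact ih _

lemma mem_projEpsNFA_εClosure_iff (T : Set Q) (q : Q) :
    q ∈ (projEpsNFA S B).εClosure T ↔
      ∃ u : List A, (∀ a ∈ u, a ∉ S) ∧ q ∈ B.evalFrom T u := by
  constructor
  · intro h
    induction h with
    | base s hs => exact ⟨[], by simp, hs⟩
    | step s t ht _ ih =>
      obtain ⟨u, hu, hs⟩ := ih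
      have : ∃ σ, σ ∉ S ∧ t ∈ B.step s σ := by
        simpa [projEpsNFA] using ht
      obtain ⟨σ, hσ, htσ⟩ := this
      refine ⟨u ++ [σ], ?_, ?_⟩
      · intro a ha
        rcases List.mem_append.1 ha with h' | h'
        · exact hu a h'
        · simpa using (by simpa using h' : a = σ) ▸ hσ
      · rw [nfa_evalFrom_append, NFA.evalFrom_singleton, NFA.mem_stepSet]
        exact ⟨s, hs, htσ⟩
  · rintro ⟨u, hu, hq⟩
    induction u using List.reverseRecOn generalizing q with
    | nil => exact εNFA.εClosure.base q hq
    | append_singleton u a ih =>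
      rw [nfa_evalFrom_append, NFA.evalFrom_singleton, NFA.mem_stepSet] at hq
      obtain ⟨s, hs, hq⟩ := hq
      have hsC : s ∈ (projEpsNFA S B).εClosure T :=
        ih s (fun x hx => hu x (List.mem_append_left _ hx)) hs
      refine εNFA.εClosure.step s q ?_ hsC
      have haS : a ∉ S := hu a (by simp)
      simp only [projEpsNFA, Set.mem_iUnion]
      exact ⟨a, haS, hq⟩

lemma projEpsNFA_evalFrom_iff [DecidablePred (· ∈ S)]
    (w : List {a : A // a ∈ S}) (T : Set Q) (q : Q) :
    q ∈ List.foldl (projEpsNFA S B).stepSet ((projEpsNFA S B).εClosure T) w ↔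
      ∃ u : List A, u.filter (fun a => decide (a ∈ S)) = w.map Subtype.val ∧
        q ∈ B.evalFrom T u := by
  induction w generalizing T q with
  | nil =>
    simp only [List.foldl_nil, List.map_nil]
    rw [mem_projEpsNFA_εClosure_iff]
    constructor
    · rintro ⟨u, hu, hq⟩
      exact ⟨u, by simp [List.filter_eq_nil_iff]; exact hu, hq⟩
    · rintro ⟨u, hu, hq⟩
      refine ⟨u, ?_, hq⟩
      intro a ha
      have := List.filter_eq_nil_iff.1 hu a ha
      simpa using this
  | cons a w ih =>
    rw [List.foldl_cons]
    have hstep : (projEpsNFA S B).stepSet ((projEpsNFA S B).εClosure T) a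
        = (projEpsNFA S B).εClosure (B.stepSet ((projEpsNFA S B).εClosure T) a.val) := by
      ext p
      rw [εNFA.mem_stepSet_iff, mem_projEpsNFA_εClosure_iff]
      constructor
      · rintro ⟨t, ht, hp⟩
        have : p ∈ (projEpsNFA S B).εClosure (B.step t a.val) := hp
        rw [mem_projEpsNFA_εClosure_iff] at this
        obtain ⟨u, hu, hp'⟩ := this
        refine ⟨u, hu, nfa_evalFrom_mono B ?_ u hp'⟩
        intro x hx
        rw [NFA.mem_stepSet]
        exact ⟨t, ht, hx⟩
      · rintro ⟨u, hu, hp⟩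
        have : B.stepSet ((projEpsNFA S B).εClosure T) a.val
            = ⋃ t : (projEpsNFA S B).εClosure T, B.step t.1 a.val := by
          ext x
          rw [NFA.mem_stepSet]
          simp [Set.mem_iUnion]
        rw [this, nfa_evalFrom_iUnion] at hp
        obtain ⟨t, hp⟩ := Set.mem_iUnion.1 hp
        refine ⟨t.1, t.2, ?_⟩
        show p ∈ (projEpsNFA S B).εClosure (B.step t.1 a.val)
        rw [mem_projEpsNFA_εClosure_iff]
        exact ⟨u, hu, hp⟩
    rw [hstep, ih]
    constructor
    · rintro ⟨u', hu', hq⟩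
      have : B.stepSet ((projEpsNFA S B).εClosure T) a.val
          = ⋃ t : (projEpsNFA S B).εClosure T, B.step t.1 a.val := by
        ext x
        rw [NFA.mem_stepSet]
        simp [Set.mem_iUnion]
      rw [this, nfa_evalFrom_iUnion] at hq
      obtain ⟨⟨s, hs⟩, hq⟩ := Set.mem_iUnion.1 hq
      rw [mem_projEpsNFA_εClosure_iff] at hs
      obtain ⟨v, hv, hsv⟩ := hs
      refine ⟨v ++ a.val :: u', ?_, ?_⟩
      · rw [List.filter_append, List.filter_cons]
        have h1 : v.filter (fun a => decide (a ∈ S)) = [] := by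
          rw [List.filter_eq_nil_iff]
          intro x hx
          simpa using hv x hx
        simp [h1, a.2, hu']
      · rw [nfa_evalFrom_append, nfa_evalFrom_cons]
        refine nfa_evalFrom_mono B ?_ u' hq
        intro x hx
        rw [NFA.mem_stepSet]
        exact ⟨s, hsv, hx⟩
    · rintro ⟨u, hu, hq⟩
      simp only [List.map_cons] at hu
      rw [List.filter_eq_cons_iff] at hu
      obtain ⟨l₁, l₂, rfl, hl₁, _, hl₂⟩ := hu
      refine ⟨l₂, hl₂, ?_⟩
      rw [nfa_evalFrom_append, nfa_evalFrom_cons] at hq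
      refine nfa_evalFrom_mono B ?_ l₂ hq
      refine nfa_stepSet_mono B ?_ a.val
      intro x hx
      rw [mem_projEpsNFA_εClosure_iff]
      exact ⟨l₁, fun y hy => by simpa using hl₁ y hy, hx⟩

end Aux

/-- The language accepted by `B^ε` equals the projection of the language of `B` onto `S`
(identifying words over the sub-alphabet `S` with words over `A` via the inclusion). -/
theorem projEpsNFA_accepts {A Q : Type*} [DecidableEq A] (S : Set A)
    [DecidablePred (· ∈ S)] (B : NFA A Q) :
    (fun w : List {a : A // a ∈ S} => w.map Subtype.val) '' (projEpsNFA S B).accepts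
      = (fun w : List A => w.filter fun a => decide (a ∈ S)) '' B.accepts := by
  ext x
  show (∃ w, w ∈ (projEpsNFA S B).accepts ∧ w.map Subtype.val = x) ↔
    ∃ u, u ∈ B.accepts ∧ u.filter (fun a => decide (a ∈ S)) = x
  constructor
  · rintro ⟨w, hw, rfl⟩
    obtain ⟨q, hqacc, hq⟩ := hw
    have : q ∈ List.foldl (projEpsNFA S B).stepSet
        ((projEpsNFA S B).εClosure B.start) w := hq
    rw [projEpsNFA_evalFrom_iff] at this
    obtain ⟨u, hu, hq'⟩ := this
    exact ⟨u, ⟨q, hqacc, hq'⟩, hu⟩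
  · rintro ⟨u, hu, rfl⟩
    obtain ⟨q, hqacc, hq⟩ := hu
    have hall : ∀ a ∈ u.filter (fun a => decide (a ∈ S)), a ∈ S := by
      intro a ha
      have := List.of_mem_filter ha
      simpa using this
    refine ⟨(u.filter (fun a => decide (a ∈ S))).pmap Subtype.mk hall, ?_, ?_⟩
    · refine ⟨q, hqacc, ?_⟩
      show q ∈ List.foldl (projEpsNFA S B).stepSet
        ((projEpsNFA S B).εClosure B.start) _
      rw [projEpsNFA_evalFrom_iff]
      exact ⟨u, by rw [List.map_pmap]; simp, hq⟩
    · rw [List.map_pmap]; simp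
end

section
/- Let T = (S, s₀, →, Σ, h) be a transition system and let B be an NFA over Σ with states Q, initial states Q_in, transition function δ, and accepting states F. Define the product NFA E over Σ with state set (Option S) × Q, initial states {(none, q) | q ∈ Q_in}, accepting states {(some s, q) | s ∈ S, q ∈ F}, and transitions: from (none, q) on letter h(s₀) to (some s₀, q') for every q' ∈ δ(q, h(s₀)); and from (some s, q) on letter h(s') to (some s', q') whenever s → s' and q' ∈ δ(q, h(s')). Then a word w is accepted by E if and only if w is accepted by B and there exists a finite trajectory s(0) s(1) … s(n) of T with s(0) = s₀, s(k) → s(k+1) for all 0 ≤ k < n, and w = [h(s(0)), h(s(1)), …, h(s(n))]. -/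
/-- The product automaton `E = T ⊗ B` between a transition system
`T = (S, s₀, tr, A, h)` (with a dummy `Start` state, encoded as `none`) and an NFA `B`
over `A`. From `(none, q)` it can move on letter `h s₀` to `(some s₀, q')` for any
`q' ∈ δ(q, h s₀)`; from `(some s, q)` it can move on letter `h s'` to `(some s', q')`
whenever `tr s s'` and `q' ∈ δ(q, h s')`. -/
def productNFA {A S Q : Type*} (s₀ : S) (tr : S → S → Prop) (h : S → A)
    (B : NFA A Q) : NFA A (Option S × Q) where
  step := fun p a =>
    match p with
    | (none, q) =>
        {p' | ∃ q', p' = (some s₀, q') ∧ a = h s₀ ∧ q' ∈ B.step q (h s₀)}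
    | (some s, q) =>
        {p' | ∃ s' q', p' = (some s', q') ∧ tr s s' ∧ a = h s' ∧ q' ∈ B.step q (h s')}
  start := {p | ∃ q ∈ B.start, p = (none, q)}
  accept := {p | ∃ s q, q ∈ B.accept ∧ p = (some s, q)}

namespace ProductNFAAux

variable {A S Q : Type*}

/-- A trajectory of the transition system ending in state `s`, generating word `w`. -/
inductive Traj (s₀ : S) (tr : S → S → Prop) (h : S → A) : S → List A → Prop
  | base : Traj s₀ tr h s₀ [h s₀]
  | step {s s' : S} {w : List A} : Traj s₀ tr h s w → tr s s' → Traj s₀ tr h s' (w ++ [h s'])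

variable {s₀ : S} {tr : S → S → Prop} {h : S → A}

lemma Traj.ne_nil {s : S} {w : List A} (t : Traj s₀ tr h s w) : w ≠ [] := by
  induction t <;> simp

lemma Traj.snoc_inv {s'' : S} {v : List A} (t : Traj s₀ tr h s'' v) :
    ∀ w a, v = w ++ [a] →
      (w = [] ∧ a = h s₀ ∧ s'' = s₀) ∨ ∃ s, Traj s₀ tr h s w ∧ tr s s'' ∧ a = h s'' := by
  induction t with
  | base =>
    intro w a hv
    rcases w with _ | ⟨x, w⟩
    · simp_all
    · simp at hv
  | step t htr ih =>
    intro w a hv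
    obtain ⟨hw, ha⟩ := List.append_inj' hv rfl
    right
    exact ⟨_, hw ▸ t, htr, (List.cons.injEq .. ▸ ha).1.symm⟩

lemma Traj.to_chain {s : S} {w : List A} (t : Traj s₀ tr h s w) :
    ∃ rest : List S, List.Chain tr s₀ rest ∧ w = (s₀ :: rest).map h ∧
      (s₀ :: rest).getLast? = some s := by
  induction t with
  | base => exact ⟨[], by simp [List.Chain]⟩
  | @step s s' w t htr ih =>
    obtain ⟨rest, hc, hw, hl⟩ := ih
    refine ⟨rest ++ [s'], ?_, by simp [hw], ?_⟩
    · show List.IsChain tr (s₀ :: (rest ++ [s']))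
      rw [show s₀ :: (rest ++ [s']) = (s₀ :: rest) ++ [s'] from rfl, List.isChain_append]
      refine ⟨hc, List.isChain_singleton _, ?_⟩
      intro x hx y hy
      simp at hy
      rw [hl] at hx
      simp at hx
      rw [hx, hy] at htr
      exact htr
    · rw [show s₀ :: (rest ++ [s']) = (s₀ :: rest) ++ [s'] from rfl, List.getLast?_concat]

lemma chain_to_traj {rest : List S} (hc : List.Chain tr s₀ rest) :
    ∃ s, ((s₀ :: rest).getLast? = some s) ∧ Traj s₀ tr h s ((s₀ :: rest).map h) := by
  induction rest using List.reverseRecOn with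
  | nil => exact ⟨s₀, by simp, Traj.base⟩
  | append_singleton r x ih =>
    have hc' : List.IsChain tr ((s₀ :: r) ++ [x]) := hc
    rw [List.isChain_append] at hc'
    obtain ⟨hc1, _, hrel⟩ := hc'
    obtain ⟨s, hl, t⟩ := ih hc1
    refine ⟨x, ?_, ?_⟩
    · rw [show s₀ :: (r ++ [x]) = (s₀ :: r) ++ [x] from rfl, List.getLast?_concat]
    · have : (s₀ :: (r ++ [x])).map h = ((s₀ :: r).map h) ++ [h x] := by simp
      rw [this]
      exact t.step (hrel s hl x (by simp))

lemma eval_product {s₀ : S} {tr : S → S → Prop} {h : S → A} {B : NFA A Q}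
    (w : List A) (p : Option S × Q) :
    p ∈ (productNFA s₀ tr h B).eval w ↔
      (w = [] ∧ ∃ q ∈ B.start, p = (none, q)) ∨
      (∃ s q, p = (some s, q) ∧ Traj s₀ tr h s w ∧ q ∈ B.eval w) := by
  induction w using List.reverseRecOn generalizing p with
  | nil =>
    simp only [NFA.eval_nil]
    constructor
    · intro hp
      refine Or.inl ⟨by simp, ?_⟩
      exact hp
    · rintro (⟨-, hp⟩ | ⟨s, q, -, t, -⟩)
      · exact hp
      · exact absurd rfl t.ne_nil
  | append_singleton w a ih =>
    rw [NFA.eval_append_singleton, NFA.mem_stepSet]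
    constructor
    · rintro ⟨p', hp', hstep⟩
      rcases (ih p').1 hp' with ⟨hw, q', hq', hp'e⟩ | ⟨s, q', hp'e, t, hq'⟩
      · subst hw; subst hp'e
        obtain ⟨q, hpq, ha, hqstep⟩ := hstep
        refine Or.inr ⟨s₀, q, hpq, ha ▸ Traj.base, ?_⟩
        rw [show ([] : List A) ++ [a] = [a] from rfl, NFA.eval_singleton, NFA.mem_stepSet]
        exact ⟨q', hq', ha ▸ hqstep⟩
      · subst hp'e
        obtain ⟨s', q, hpq, htr, ha, hqstep⟩ := hstep
        refine Or.inr ⟨s', q, hpq, ?_, ?_⟩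
        · have := t.step htr
          rwa [← ha] at this
        · rw [NFA.eval_append_singleton, NFA.mem_stepSet]
          exact ⟨q', hq', ha ▸ hqstep⟩
    · rintro (⟨hw, -⟩ | ⟨s'', q, hpq, t, hq⟩)
      · exact absurd hw (by simp)
      · rw [NFA.eval_append_singleton, NFA.mem_stepSet] at hq
        obtain ⟨q', hq', hqstep⟩ := hq
        rcases t.snoc_inv w a rfl with ⟨hw, ha, hs⟩ | ⟨s, tw, htr, ha⟩
        · refine ⟨(none, q'), (ih _).2 (Or.inl ⟨hw, q', by simpa [hw] using hq', rfl⟩), ?_⟩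
          exact ⟨q, by rw [hpq, hs], ha, by rwa [← ha]⟩
        · refine ⟨(some s, q'), (ih _).2 (Or.inr ⟨s, q', rfl, tw, hq'⟩), ?_⟩
          exact ⟨s'', q, hpq, htr, ha, by rwa [← ha]⟩

end ProductNFAAux

open ProductNFAAux

/-- A word `w` is accepted by the product automaton `E = T ⊗ B` iff `w` is accepted by `B`
and there is a finite trajectory `s(0) s(1) … s(n)` of `T` (i.e. `s(0) = s₀` and
`s(k) → s(k+1)` for all `k`) generating `w`, i.e. `w = [h (s 0), …, h (s n)]`. -/
theorem productNFA_accepts {A S Q : Type*} [DecidableEq A] (s₀ : S)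
    (tr : S → S → Prop) (h : S → A) (B : NFA A Q) (w : List A) :
    w ∈ (productNFA s₀ tr h B).accepts ↔
      w ∈ B.accepts ∧
        ∃ rest : List S, List.Chain tr s₀ rest ∧ w = (s₀ :: rest).map h := by
  constructor
  · rintro ⟨p, hacc, hev⟩
    obtain ⟨s, q, hq, hp⟩ := hacc
    rcases (eval_product w p).1 hev with ⟨-, q', -, hp'⟩ | ⟨s', q', hp', t, hq'⟩
    · rw [hp] at hp'; simp at hp'
    · rw [hp] at hp'
      have hqq : q = q' := by simpa using congrArg Prod.snd hp'
      obtain ⟨rest, hc, hw, -⟩ := t.to_chain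
      exact ⟨⟨q', hqq ▸ hq, hq'⟩, rest, hc, hw⟩
  · rintro ⟨⟨q, hq, hqe⟩, rest, hc, hw⟩
    obtain ⟨s, -, t⟩ := chain_to_traj (h := h) hc
    rw [← hw] at t
    exact ⟨(some s, q), ⟨s, q, hq, rfl⟩, (eval_product w _).2 (Or.inr ⟨s, q, rfl, t, hqe⟩)⟩
end

section
/- Let I be a finite index set, {Σ_i ⊆ Σ, i ∈ I} a distribution of Σ, and for each i ∈ I let E_i be an NFA with states Q_i, initial states Q_in_i, transition function δ_i : Q_i → Σ → Set Q_i, and accepting states F_i, such that δ_i(q, σ) = ∅ whenever σ ∉ Σ_i. Define the synchronous product NFA P over Σ with state set ∏_{i∈I} Q_i, initial states ∏_{i∈I} Q_in_i, accepting states ∏_{i∈I} F_i, and transitions: q' ∈ δ_P(q, σ) iff for every i with σ ∈ Σ_i one has q'(i) ∈ δ_i(q(i), σ), and for every i with σ ∉ Σ_i one has q'(i) = q(i). Then the language of P equals the product of the languages of the components: L(P) = ∥_{i∈I} L(E_i) = {w : List Σ | ∀ i ∈ I, w ↾ Σ_i ∈ L(E_i)}. -/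
/-- The synchronous product `P = ∥_{i∈I} E i` of a family of NFAs `E i` over the
common alphabet `A`: its states are tuples of component states; on a letter `σ`,
the components `i` with `σ ∈ Sig i` move according to `E i` while the others stay put. -/
def syncProd {A I : Type*} (Sig : I → Set A) {Q : I → Type*}
    (E : ∀ i, NFA A (Q i)) : NFA A (∀ i, Q i) where
  step := fun q σ =>
    {q' | ∀ i, (σ ∈ Sig i → q' i ∈ (E i).step (q i) σ) ∧ (σ ∉ Sig i → q' i = q i)}
  start := {q | ∀ i, q i ∈ (E i).start}
  accept := {q | ∀ i, q i ∈ (E i).accept}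

lemma syncProd_stepSet {A I : Type*} (Sig : I → Set A)
    [∀ i, DecidablePred (· ∈ Sig i)] {Q : I → Type*} (E : ∀ i, NFA A (Q i))
    (S : ∀ i, Set (Q i)) (a : A) :
    (syncProd Sig E).stepSet {p | ∀ i, p i ∈ S i} a
      = {q | ∀ i, q i ∈ (if a ∈ Sig i then (E i).stepSet (S i) a else S i)} := by
  ext q'
  simp only [NFA.mem_stepSet, Set.mem_setOf_eq]
  constructor
  · rintro ⟨q, hq, hs⟩ i
    by_cases h : a ∈ Sig i
    · simp only [if_pos h, NFA.mem_stepSet]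
      exact ⟨q i, hq i, (hs i).1 h⟩
    · simp only [if_neg h]
      rw [(hs i).2 h]; exact hq i
  · intro h'
    have : ∀ i, ∃ s, s ∈ S i ∧ (a ∈ Sig i → q' i ∈ (E i).step s a)
        ∧ (a ∉ Sig i → q' i = s) := by
      intro i
      by_cases h : a ∈ Sig i
      · have := h' i
        simp only [if_pos h, NFA.mem_stepSet] at this
        obtain ⟨s, hs, hst⟩ := this
        exact ⟨s, hs, fun _ => hst, fun hn => absurd h hn⟩
      · have := h' i
        simp only [if_neg h] at this
        exact ⟨q' i, this, fun hc => absurd hc h, fun _ => rfl⟩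
    choose q hq h1 h2 using this
    exact ⟨q, hq, fun i => ⟨h1 i, h2 i⟩⟩

lemma syncProd_evalFrom {A I : Type*} [DecidableEq A] (Sig : I → Set A)
    [∀ i, DecidablePred (· ∈ Sig i)] {Q : I → Type*} (E : ∀ i, NFA A (Q i))
    (w : List A) (S : ∀ i, Set (Q i)) :
    (syncProd Sig E).evalFrom {p | ∀ i, p i ∈ S i} w
      = {q | ∀ i, q i ∈ (E i).evalFrom (S i) (proj Sig i w)} := by
  induction w generalizing S with
  | nil => simp [NFA.evalFrom, proj]
  | cons a w ih =>
    rw [show (syncProd Sig E).evalFrom {p | ∀ i, p i ∈ S i} (a :: w)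
        = (syncProd Sig E).evalFrom
            ((syncProd Sig E).stepSet {p | ∀ i, p i ∈ S i} a) w from rfl,
      syncProd_stepSet, ih]
    ext q
    simp only [Set.mem_setOf_eq]
    constructor <;> intro h i <;> [skip; skip] <;>
    · have := h i
      by_cases hc : a ∈ Sig i <;>
        simp only [proj, List.filter_cons, hc, decide_true, if_true,
          decide_false, if_false, ite_true, ite_false, NFA.evalFrom,
          decide_eq_true_eq, if_pos, if_neg] at this ⊢ <;>
      exact this

/-- If `I` is finite, `{Sig i, i ∈ I}` is a distribution of the alphabet, and each
component NFA `E i` only has transitions on letters of `Sig i`, then the language of the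
synchronous product equals the product of the component languages:
`L(P) = {w | ∀ i, w ↾ Sig i ∈ L(E i)}`. -/
theorem syncProd_accepts {A I : Type*} [DecidableEq A] [Fintype I] (Sig : I → Set A)
    [∀ i, DecidablePred (· ∈ Sig i)] (hcov : (⋃ i, Sig i) = Set.univ)
    {Q : I → Type*} (E : ∀ i, NFA A (Q i))
    (hstep : ∀ i q σ, σ ∉ Sig i → (E i).step q σ = ∅) :
    (syncProd Sig E).accepts
      = {w : List A | ∀ i, proj Sig i w ∈ (E i).accepts} := by
  ext w
  have key := syncProd_evalFrom Sig E w (fun i => (E i).start)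
  simp only [NFA.accepts, NFA.eval, Set.mem_setOf_eq]
  constructor
  · rintro ⟨q, hacc, hev⟩ i
    rw [show (syncProd Sig E).evalFrom (syncProd Sig E).start w
        = (syncProd Sig E).evalFrom {p | ∀ i, p i ∈ (E i).start} w from rfl, key] at hev
    exact ⟨q i, hacc i, hev i⟩
  · intro h
    choose q hacc hev using h
    refine ⟨q, hacc, ?_⟩
    rw [show (syncProd Sig E).evalFrom (syncProd Sig E).start w
        = (syncProd Sig E).evalFrom {p | ∀ i, p i ∈ (E i).start} w from rfl, key]
    exact hev
end
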